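/- For every real ξ with 0 ≤ ξ < 1, the integral ∫₀^π cos ψ / (1 − ξ cos ψ)^{3/2} dψ equals (π/(1+ξ)^{3/2}) · [₂F₁(3/2, 3/2; 2; 2ξ/(1+ξ)) − ₂F₁(1/2, 3/2; 1; 2ξ/(1+ξ))]. -/

import Mathlib

open Real intervalIntegral
open Filter

/-- Pochhammer symbol `(a)_n` for real `a`. -/
noncomputable def poch (a : ℝ) (n : ℕ) : ℝ := ∏ i ∈ Finset.range n, (a + i)

lemma poch_zero (a : ℝ) : poch a 0 = 1 := by simp [poch]

lemma poch_succ (a : ℝ) (n : ℕ) : poch a (n + 1) = poch a n * (a + n) := by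
  simp [poch, Finset.prod_range_succ]

lemma poch_pos {a : ℝ} (ha : 0 < a) (n : ℕ) : 0 < poch a n := by
  apply Finset.prod_pos; intro i _; positivity

lemma poch_one (n : ℕ) : poch 1 n = n.factorial := by
  induction n with
  | zero => simp [poch_zero]
  | succ k ih => rw [poch_succ, ih, Nat.factorial_succ]; push_cast; ring

lemma poch_two (n : ℕ) : poch 2 n = (n + 1).factorial := by
  induction n with
  | zero => simp [poch_zero]
  | succ k ih => rw [poch_succ, ih, Nat.factorial_succ (k+1)]; push_cast; ring

lemma poch_three_halves (n : ℕ) : poch (3/2) n = poch (1/2) n * (2 * n + 1) := by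
  induction n with
  | zero => simp [poch_zero]
  | succ k ih => rw [poch_succ, ih, poch_succ]; push_cast; ring

/-- `(n+a)/(n+b) → 1`. -/
lemma tendsto_ratio (a b : ℝ) :
    Tendsto (fun n : ℕ => ((n : ℝ) + a) / ((n : ℝ) + b)) atTop (nhds 1) := by
  have h := (tendsto_natCast_div_add_atTop (𝕜 := ℝ) b).div
    (tendsto_natCast_div_add_atTop (𝕜 := ℝ) a) one_ne_zero
  rw [div_one] at h
  apply h.congr'
  filter_upwards [eventually_gt_atTop (⌈|a| + |b|⌉₊)] with n hn
  have hn' : |a| + |b| < (n : ℝ) := lt_of_le_of_lt (Nat.le_ceil _) (by exact_mod_cast hn)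
  have h1 : (0:ℝ) < (n : ℝ) + a := by nlinarith [neg_abs_le a, abs_nonneg b]
  have h2 : (0:ℝ) < (n : ℝ) + b := by nlinarith [neg_abs_le b, abs_nonneg a]
  have h3 : (0:ℝ) < (n:ℝ) := by exact_mod_cast (Nat.zero_le _).trans_lt hn
  simp only [Pi.div_apply]
  field_simp

/-- Ratio test for series `d n * r ^ n` with `d (n+1)/d n → 1`. -/
lemma summable_coeff_mul_pow {d : ℕ → ℝ} (hd : ∀ n, 0 < d n)
    (hr : Tendsto (fun n => d (n + 1) / d n) atTop (nhds 1)) {r : ℝ} (h : |r| < 1) :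
    Summable fun n => d n * r ^ n := by
  rcases eq_or_ne r 0 with rfl | hr0
  · apply summable_of_ne_finset_zero (s := {0})
    intro n hn
    simp only [Finset.mem_singleton] at hn
    simp [zero_pow hn]
  · apply summable_of_ratio_test_tendsto_lt_one h
    · filter_upwards with n
      exact mul_ne_zero (hd n).ne' (pow_ne_zero _ hr0)
    · have : (fun n => ‖d (n+1) * r ^ (n+1)‖ / ‖d n * r ^ n‖)
          = fun n => (d (n+1) / d n) * |r| := by
        funext n
        rw [norm_mul, norm_mul, norm_pow, norm_pow, Real.norm_eq_abs, Real.norm_eq_abs,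
          Real.norm_eq_abs, abs_of_pos (hd _), abs_of_pos (hd _), pow_succ]
        have h1 : (0:ℝ) < |r| := abs_pos.2 hr0
        have hp : (0:ℝ) < |r| ^ n := pow_pos h1 n
        rw [show d (n+1) * (|r|^n * |r|) = (d (n+1) * |r|) * |r|^n by ring,
          mul_div_mul_right _ _ hp.ne', mul_div_right_comm]
      rw [this]
      have := hr.mul (tendsto_const_nhds (x := |r|) (f := atTop))
      rw [one_mul] at this
      exact this

lemma summable_hyp {a b c : ℝ} (ha : 0 < a) (hb : 0 < b) (hc : 0 < c) {z : ℝ} (hz : |z| < 1) :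
    Summable fun n => poch a n * poch b n / (poch c n * n.factorial) * z ^ n := by
  apply summable_coeff_mul_pow (d := fun n => poch a n * poch b n / (poch c n * n.factorial))
  · intro n
    have := poch_pos ha n; have := poch_pos hb n; have := poch_pos hc n
    have : (0:ℝ) < n.factorial := by exact_mod_cast n.factorial_pos
    positivity
  · have key : (fun n => (poch a (n+1) * poch b (n+1) / (poch c (n+1) * (n+1).factorial)) /
        (poch a n * poch b n / (poch c n * n.factorial)))
        = fun n : ℕ => (((n:ℝ) + a) / ((n:ℝ) + c)) * (((n:ℝ) + b) / ((n:ℝ) + 1)) := by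
      funext n
      have h1 := (poch_pos ha n).ne'
      have h2 := (poch_pos hb n).ne'
      have h3 := (poch_pos hc n).ne'
      have h4 : ((n.factorial : ℝ)) ≠ 0 := by exact_mod_cast n.factorial_pos.ne'
      rw [poch_succ, poch_succ, poch_succ, Nat.factorial_succ]
      push_cast
      field_simp
      ring
    rw [key]
    have := (tendsto_ratio a c).mul (tendsto_ratio b 1)
    rw [one_mul] at this
    exact this
  · exact hz

set_option maxHeartbeats 1000000 in
/-- Binomial series: `(1-t)^(-s) = ∑ (s)_n / n! * t^n` for `s > 0`, `0 ≤ t < 1`. -/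
lemma hasSum_binomial {s : ℝ} (hs : 0 < s) {t : ℝ} (ht0 : 0 ≤ t) (ht1 : t < 1) :
    HasSum (fun n => poch s n / n.factorial * t ^ n) ((1 - t) ^ (-s) : ℝ) := by
  -- coefficients
  set c : ℕ → ℝ := fun n => poch s n / n.factorial with hc
  have hcpos : ∀ n, 0 < c n := fun n => by
    have := poch_pos hs n
    have : (0:ℝ) < n.factorial := by exact_mod_cast n.factorial_pos
    positivity
  have hsum : ∀ {y : ℝ}, |y| < 1 → Summable (fun n => c n * y ^ n) := by
    intro y hy
    have := summable_hyp hs one_pos one_pos hy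
    apply this.congr
    intro n
    rw [poch_one]
    have h4 : ((n.factorial : ℝ)) ≠ 0 := by exact_mod_cast n.factorial_pos.ne'
    simp only [hc]
    field_simp
  rcases eq_or_lt_of_le ht0 with rfl | htpos
  · have : (1 - (0:ℝ)) ^ (-s) = c 0 * 0 ^ 0 := by
      simp [hc, poch_zero]
    rw [this]
    apply hasSum_single (f := fun n => c n * (0:ℝ) ^ n) 0
    intro n hn
    simp [zero_pow hn]
  -- main case 0 < t < 1
  set r : ℝ := (1 + t) / 2 with hrdef
  have hrt : t < r := by rw [hrdef]; linarith
  have hr1 : r < 1 := by rw [hrdef]; linarith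
  have hr0 : 0 < r := by rw [hrdef]; linarith
  set u : ℕ → ℝ := fun n => c n * (n + 1) * r ^ n / r with hu
  have husum : Summable u := by
    have : Summable fun n => (c n * (n + 1) / r) * r ^ n := by
      apply summable_coeff_mul_pow
      · intro n; have := hcpos n; positivity
      · have key : (fun n : ℕ => (c (n+1) * (((n+1:ℕ):ℝ)+1) / r) / (c n * ((n:ℝ)+1) / r))
            = fun n : ℕ => (((n:ℝ) + s) / ((n:ℝ) + 1)) * (((n:ℝ) + 2) / ((n:ℝ) + 1)) := by
          funext n
          have h1 := (poch_pos hs n).ne'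
          have h4 : ((n.factorial : ℝ)) ≠ 0 := by exact_mod_cast n.factorial_pos.ne'
          simp only [hc]
          rw [poch_succ, Nat.factorial_succ]
          push_cast
          field_simp
          ring
        rw [key]
        have := (tendsto_ratio s 1).mul (tendsto_ratio 2 1)
        rw [one_mul] at this
        exact this
      · rw [abs_of_pos hr0]; exact hr1
    apply this.congr
    intro n
    rw [hu]
    ring
  -- derivative of the sum on Ioo (-r) r
  set G : ℝ → ℝ := fun y => ∑' n, c n * y ^ n with hG
  set G' : ℝ → ℝ := fun y => ∑' n, c n * ((n : ℝ) * y ^ (n - 1)) with hG'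
  have hbound : ∀ (n : ℕ) (y : ℝ), y ∈ Set.Ioo (-r) r → ‖c n * ((n:ℝ) * y ^ (n-1))‖ ≤ u n := by
    intro n y hy
    have hyr : |y| ≤ r := by
      rw [abs_le]; exact ⟨hy.1.le, hy.2.le⟩
    rw [norm_mul, norm_mul, Real.norm_eq_abs, Real.norm_eq_abs, Real.norm_eq_abs,
      abs_of_pos (hcpos n), Nat.abs_cast, abs_pow]
    cases n with
    | zero =>
      simp only [hu, Nat.cast_zero, zero_mul, mul_zero, pow_zero, mul_one, Nat.cast_ofNat]
      have := hcpos 0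
      positivity
    | succ m =>
      have h1 : |y| ^ (m + 1 - 1) ≤ r ^ m := by
        simpa using pow_le_pow_left₀ (abs_nonneg y) hyr m
      have h2 : c (m+1) * (((m+1:ℕ):ℝ) * |y| ^ (m+1-1)) ≤ c (m+1) * (((m+1:ℕ):ℝ) * r ^ m) := by
        apply mul_le_mul_of_nonneg_left _ (hcpos (m+1)).le
        apply mul_le_mul_of_nonneg_left h1 (by positivity)
      have hu1 : u (m+1) = c (m+1) * (((m:ℕ):ℝ)+2) * r ^ m := by
        simp only [hu]
        rw [pow_succ]
        push_cast
        field_simp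
        ring
      calc c (m+1) * ((((m+1:ℕ)):ℝ) * |y|^(m+1-1)) ≤ c (m+1) * (((m+1:ℕ):ℝ) * r ^ m) := h2
        _ ≤ u (m+1) := by
            rw [hu1]; push_cast
            nlinarith [hcpos (m+1), pow_nonneg hr0.le m]
  have hderivG : ∀ y ∈ Set.Ioo (-r) r, HasDerivAt G (G' y) y := by
    intro y hy
    apply hasDerivAt_tsum_of_isPreconnected husum (isOpen_Ioo) (convex_Ioo _ _).isPreconnected
      (g := fun n y => c n * y ^ n) (g' := fun n y => c n * ((n:ℝ) * y ^ (n-1)))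
      (fun n x _ => (hasDerivAt_pow n x).const_mul (c n)) hbound
      (Set.mem_Ioo.2 ⟨by linarith, hr0⟩) _ hy
    · apply summable_of_ne_finset_zero (s := {0})
      intro n hn
      simp only [Finset.mem_singleton] at hn
      simp [zero_pow hn]
  -- ODE: (1-y) * G' y = s * G y on Ioo (-r) r
  have hODE : ∀ y ∈ Set.Ioo (-r) r, (1 - y) * G' y = s * G y := by
    intro y hy
    have hyabs : |y| < 1 := by
      rw [abs_lt]; constructor <;> [linarith [hy.1]; linarith [hy.2]]
    have hGsum : HasSum (fun n => c n * y ^ n) (G y) := (hsum hyabs).hasSum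
    have hG'sum : HasSum (fun n => c n * ((n:ℝ) * y ^ (n-1))) (G' y) := by
      apply Summable.hasSum
      exact Summable.of_norm_bounded husum (fun n => hbound n y hy)
    have hshift : HasSum (fun n => c (n+1) * (((n+1:ℕ):ℝ) * y ^ ((n+1)-1))) (G' y) := by
      apply (hasSum_nat_add_iff (f := fun n => c n * ((n:ℝ) * y ^ (n-1))) 1).2
      simpa using hG'sum
    have hcoef : ∀ n : ℕ, c (n+1) * (((n+1:ℕ):ℝ)) = c n * (s + n) := by
      intro n
      have h4 : ((n.factorial : ℝ)) ≠ 0 := by exact_mod_cast n.factorial_pos.ne'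
      simp only [hc]
      rw [poch_succ, Nat.factorial_succ]
      push_cast
      field_simp
    have hshift' : HasSum (fun n : ℕ => s * (c n * y ^ n) + c n * ((n:ℝ) * y ^ n)) (G' y) := by
      apply hshift.congr_fun
      intro n
      have : c (n+1) * (((n+1:ℕ):ℝ) * y ^ ((n+1)-1)) = (c (n+1) * (((n+1:ℕ):ℝ))) * y ^ n := by
        simp; ring
      rw [this, hcoef n]
      push_cast
      ring
    have hyG' : HasSum (fun n : ℕ => c n * ((n:ℝ) * y ^ n)) (y * G' y) := by
      have := hG'sum.mul_left y
      apply this.congr_fun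
      intro n
      cases n with
      | zero => simp
      | succ m =>
        simp only [Nat.add_sub_cancel]
        rw [pow_succ]
        ring
    have huniq := hshift'.unique ((hGsum.mul_left s).add hyG')
    linarith [huniq]
  -- the product (fun y => G y * (1-y)^s) has zero derivative on [0, t]
  have h1t : (0:ℝ) < 1 - t := by linarith
  have hderivh : ∀ y ∈ Set.Icc (0:ℝ) t, HasDerivAt (fun y => G y * (1-y) ^ s) 0 y := by
    intro y hy
    have hmem : y ∈ Set.Ioo (-r) r := ⟨by linarith [hy.1], lt_of_le_of_lt hy.2 hrt⟩
    have h1y : (0:ℝ) < 1 - y := by linarith [hy.2]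
    have hd1 := hderivG y hmem
    have hd2 : HasDerivAt (fun y : ℝ => (1-y) ^ s) (-(s * (1-y) ^ (s-1))) y := by
      have h := Real.hasDerivAt_rpow_const (x := 1-y) (p := s) (Or.inl h1y.ne')
      have h2 : HasDerivAt (fun y : ℝ => 1 - y) (-1) y := (hasDerivAt_id y).const_sub 1
      have := h.comp y h2
      rw [show -(s * (1-y) ^ (s-1)) = s * (1-y) ^ (s-1) * -1 by ring]
      exact this
    have hmul := hd1.mul hd2
    have hmul' : HasDerivAt (fun y => G y * (1-y) ^ s)
        (G' y * (1 - y) ^ s + G y * -(s * (1 - y) ^ (s - 1))) y := hmul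
    refine hmul'.congr_deriv (Eq.symm ?_)
    have hode := hODE y hmem
    have e : (1-y) ^ s = (1-y) ^ (s-1) * (1-y) := by
      rw [Real.rpow_sub_one h1y.ne', div_mul_cancel₀ _ h1y.ne']
    rw [e]
    linear_combination (-((1-y) ^ (s-1))) * hode
  have hconst := constant_of_derivWithin_zero (f := fun y => G y * (1-y) ^ s) (a := 0) (b := t)
    (fun y hy => ((hderivh y hy).differentiableAt).differentiableWithinAt)
    (fun y hy => by
      have hd := (hderivh y (Set.Ico_subset_Icc_self hy)).hasDerivWithinAt
        (s := Set.Icc (0:ℝ) t)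
      exact hd.derivWithin (uniqueDiffOn_Icc htpos y (Set.Ico_subset_Icc_self hy)))
    t (Set.right_mem_Icc.2 htpos.le)
  have hG0 : G 0 = 1 := by
    have : G 0 = ∑' n : ℕ, c n * (0:ℝ) ^ n := rfl
    rw [this, tsum_eq_single 0 (fun n hn => by simp [zero_pow hn])]
    simp [hc, poch_zero]
  have hconst' : G t * (1-t) ^ s = G 0 * (1-(0:ℝ)) ^ s := hconst
  rw [hG0, sub_zero, Real.one_rpow, one_mul] at hconst'
  have hGt : G t = (1-t) ^ (-s) := by
    rw [Real.rpow_neg h1t.le]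
    exact eq_inv_of_mul_eq_one_left hconst'
  have htabs : |t| < 1 := by rw [abs_of_pos htpos]; exact ht1
  have := (hsum htabs).hasSum
  rwa [show (∑' n, c n * t ^ n) = (1-t) ^ (-s) from hGt] at this

/-- Gauss hypergeometric function `₂F₁(a,b;c;x)` as a power series (for `|x| < 1`). -/
noncomputable def hyp2F1 (a b c x : ℝ) : ℝ :=
  ∑' n : ℕ, (poch a n * poch b n) / (poch c n * n.factorial) * x ^ n

lemma hyp2F1_symm (a b c x : ℝ) : hyp2F1 a b c x = hyp2F1 b a c x := by
  unfold hyp2F1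
  apply tsum_congr
  intro n
  rw [mul_comm (poch a n)]

lemma hyp2F1_zero (a b c : ℝ) : hyp2F1 a b c 0 = 1 := by
  unfold hyp2F1
  rw [tsum_eq_single 0 (fun n hn => by simp [zero_pow hn])]
  simp [poch_zero]

/-- Wallis: `∫ θ in 0..π/2, cos θ ^ (2n) = (π/2) * (1/2)_n / n!`. -/
lemma integral_cos_pow_even' (n : ℕ) :
    ∫ θ in (0:ℝ)..(π/2), Real.cos θ ^ (2*n) = (π/2) * (poch (1/2) n / n.factorial) := by
  induction n with
  | zero => simp [poch_zero]
  | succ k ih =>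
    have h := integral_cos_pow (a := 0) (b := π/2) (2*k)
    have h2 : 2 * (k+1) = 2*k + 2 := by ring
    rw [h2, h, Real.cos_pi_div_two, Real.sin_zero, ih]
    have hk4 : ((k.factorial : ℝ)) ≠ 0 := by exact_mod_cast k.factorial_pos.ne'
    rw [poch_succ, Nat.factorial_succ]
    push_cast
    rw [zero_pow (by omega), zero_mul, mul_zero, zero_sub, neg_zero, zero_div, zero_add]
    field_simp
    ring

open MeasureTheory in
lemma J_eq {s : ℝ} (hs : 0 < s) {z : ℝ} (hz0 : 0 ≤ z) (hz1 : z < 1) :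
    ∫ θ in (0:ℝ)..(π/2), (1 - z * Real.cos θ ^ 2) ^ (-s) = (π/2) * hyp2F1 s (1/2) 1 z := by
  set c : ℕ → ℝ := fun n => poch s n / n.factorial with hc
  have hcpos : ∀ n, 0 < c n := fun n => by
    have := poch_pos hs n
    have : (0:ℝ) < n.factorial := by exact_mod_cast n.factorial_pos
    positivity
  have hbinom : ∀ θ : ℝ, HasSum (fun n => (c n * z ^ n) * Real.cos θ ^ (2*n))
      ((1 - z * Real.cos θ ^ 2) ^ (-s)) := by
    intro θ
    have ht0 : 0 ≤ z * Real.cos θ ^ 2 := mul_nonneg hz0 (sq_nonneg _)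
    have ht1 : z * Real.cos θ ^ 2 < 1 :=
      lt_of_le_of_lt (mul_le_of_le_one_right hz0 (Real.cos_sq_le_one θ)) hz1
    have hb := hasSum_binomial hs ht0 ht1
    apply hb.congr_fun
    intro n
    rw [mul_pow, pow_mul]
    ring
  have hpt : ∀ θ : ℝ, (1 - z * Real.cos θ ^ 2) ^ (-s)
      = ∑' n, (c n * z ^ n) * Real.cos θ ^ (2*n) := fun θ => ((hbinom θ).tsum_eq).symm
  rw [intervalIntegral.integral_congr (g := fun θ => ∑' n, (c n * z ^ n) * Real.cos θ ^ (2*n))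
    (fun θ _ => hpt θ)]
  have h0le : (0:ℝ) ≤ π/2 := by positivity
  rw [intervalIntegral.integral_of_le h0le]
  have hsummable : Summable (fun n => c n * z ^ n) := by
    rcases eq_or_lt_of_le hz0 with rfl | hzpos
    · apply summable_of_ne_finset_zero (s := {0})
      intro n hn
      simp only [Finset.mem_singleton] at hn
      simp [zero_pow hn]
    · exact (hasSum_binomial hs hz0 hz1).summable
  have hcznn : ∀ n, 0 ≤ c n * z ^ n := fun n => mul_nonneg (hcpos n).le (pow_nonneg hz0 n)
  have hinter : ∫ θ in Set.Ioc (0:ℝ) (π/2), ∑' n, (c n * z ^ n) * Real.cos θ ^ (2*n)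
      = ∑' n, ∫ θ in Set.Ioc (0:ℝ) (π/2), (c n * z ^ n) * Real.cos θ ^ (2*n) := by
    apply MeasureTheory.integral_tsum
    · intro n
      exact ((continuous_const.mul ((Real.continuous_cos).pow (2*n))).aestronglyMeasurable)
    · have hb : ∀ n, ∫⁻ θ in Set.Ioc (0:ℝ) (π/2), ‖(c n * z ^ n) * Real.cos θ ^ (2*n)‖₊
          ≤ ENNReal.ofReal ((c n * z ^ n) * (π/2)) := by
        intro n
        have hle : ∀ θ : ℝ, (‖(c n * z ^ n) * Real.cos θ ^ (2*n)‖₊ : ENNReal)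
            ≤ ENNReal.ofReal (c n * z ^ n) := by
          intro θ
          rw [← enorm_eq_nnnorm, ← ofReal_norm]
          apply ENNReal.ofReal_le_ofReal
          rw [norm_mul, norm_pow, Real.norm_eq_abs, Real.norm_eq_abs,
            abs_of_nonneg (hcznn n)]
          have h1 : |Real.cos θ| ^ (2*n) ≤ 1 :=
            pow_le_one₀ (abs_nonneg _) (Real.abs_cos_le_one θ)
          nlinarith [hcznn n]
        calc ∫⁻ θ in Set.Ioc (0:ℝ) (π/2), ‖(c n * z ^ n) * Real.cos θ ^ (2*n)‖₊
            ≤ ∫⁻ _ in Set.Ioc (0:ℝ) (π/2), ENNReal.ofReal (c n * z ^ n) :=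
              lintegral_mono (fun θ => hle θ)
          _ = ENNReal.ofReal (c n * z ^ n) * volume (Set.Ioc (0:ℝ) (π/2)) :=
              setLIntegral_const _ _
          _ = ENNReal.ofReal ((c n * z ^ n) * (π/2)) := by
              rw [Real.volume_Ioc, sub_zero, ← ENNReal.ofReal_mul (hcznn n)]
      have hsum2 : Summable (fun n => (c n * z ^ n) * (π/2)) := hsummable.mul_right _
      have := ENNReal.ofReal_tsum_of_nonneg
        (fun n => mul_nonneg (hcznn n) (by positivity)) hsum2
      have hlt : (∑' n, ∫⁻ θ in Set.Ioc (0:ℝ) (π/2), ‖(c n * z ^ n) * Real.cos θ ^ (2*n)‖₊)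
          ≤ ENNReal.ofReal (∑' n, (c n * z ^ n) * (π/2)) := by
        rw [this]
        exact ENNReal.tsum_le_tsum hb
      exact (lt_of_le_of_lt hlt ENNReal.ofReal_lt_top).ne
  rw [hinter]
  have hval : ∀ n : ℕ, ∫ θ in Set.Ioc (0:ℝ) (π/2), (c n * z ^ n) * Real.cos θ ^ (2*n)
      = (c n * z ^ n) * ((π/2) * (poch (1/2) n / n.factorial)) := by
    intro n
    rw [← intervalIntegral.integral_of_le h0le, intervalIntegral.integral_const_mul,
      integral_cos_pow_even' n]
  rw [tsum_congr hval]
  unfold hyp2F1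
  rw [← tsum_mul_left]
  apply tsum_congr
  intro n
  have h4 : ((n.factorial : ℝ)) ≠ 0 := by exact_mod_cast n.factorial_pos.ne'
  rw [poch_one]
  simp only [hc]
  field_simp

lemma I_eq {s ξ : ℝ} (hs : 0 < s) (h0 : 0 ≤ ξ) (h1 : ξ < 1) :
    ∫ ψ in (0:ℝ)..π, (1 - ξ * Real.cos ψ) ^ (-s)
      = π * (1 + ξ) ^ (-s) * hyp2F1 s (1/2) 1 (2*ξ/(1+ξ)) := by
  have hξ1 : (0:ℝ) < 1 + ξ := by linarith
  have hz0 : 0 ≤ 2*ξ/(1+ξ) := by positivity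
  have hz1 : 2*ξ/(1+ξ) < 1 := by
    rw [div_lt_one hξ1]; linarith
  have hsub := intervalIntegral.integral_comp_mul_left (a := (0:ℝ)) (b := π/2) (c := (2:ℝ))
    (f := fun ψ => (1 - ξ * Real.cos ψ) ^ (-s)) two_ne_zero
  rw [mul_zero, show (2:ℝ) * (π/2) = π by ring, smul_eq_mul] at hsub
  have h2 : ∫ ψ in (0:ℝ)..π, (1 - ξ * Real.cos ψ) ^ (-s)
      = 2 * ∫ θ in (0:ℝ)..(π/2), (1 - ξ * Real.cos (2*θ)) ^ (-s) := by
    rw [hsub]; ring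
  rw [h2]
  have hpt : ∀ θ : ℝ, (1 - ξ * Real.cos (2*θ)) ^ (-s)
      = (1+ξ) ^ (-s) * (1 - (2*ξ/(1+ξ)) * Real.cos θ ^ 2) ^ (-s) := by
    intro θ
    have hcos := Real.cos_two_mul θ
    have he : 1 - ξ * Real.cos (2*θ) = (1+ξ) * (1 - (2*ξ/(1+ξ)) * Real.cos θ ^ 2) := by
      rw [hcos]; field_simp; ring
    rw [he]
    have hnn : 0 ≤ 1 - (2*ξ/(1+ξ)) * Real.cos θ ^ 2 := by
      have : (2*ξ/(1+ξ)) * Real.cos θ ^ 2 ≤ 2*ξ/(1+ξ) :=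
        mul_le_of_le_one_right hz0 (Real.cos_sq_le_one θ)
      linarith
    rw [Real.mul_rpow hξ1.le hnn]
  rw [intervalIntegral.integral_congr (g := fun θ =>
      (1+ξ) ^ (-s) * (1 - (2*ξ/(1+ξ)) * Real.cos θ ^ 2) ^ (-s)) (fun θ _ => hpt θ),
    intervalIntegral.integral_const_mul, J_eq hs hz0 hz1]
  ring

lemma claim2 {z : ℝ} (hz0 : 0 ≤ z) (hz1 : z < 1) :
    hyp2F1 (3/2) (1/2) 1 z - hyp2F1 (1/2) (1/2) 1 z = z/2 * hyp2F1 (3/2) (3/2) 2 z := by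
  have habs : |z| < 1 := by rw [abs_of_nonneg hz0]; exact hz1
  have hA : HasSum (fun n => poch (3/2) n * poch (1/2) n / (poch 1 n * n.factorial) * z ^ n)
      (hyp2F1 (3/2) (1/2) 1 z) :=
    (summable_hyp (by norm_num) (by norm_num) one_pos habs).hasSum
  have hB : HasSum (fun n => poch (1/2) n * poch (1/2) n / (poch 1 n * n.factorial) * z ^ n)
      (hyp2F1 (1/2) (1/2) 1 z) :=
    (summable_hyp (by norm_num) (by norm_num) one_pos habs).hasSum
  have hC : HasSum (fun n => poch (3/2) n * poch (3/2) n / (poch 2 n * n.factorial) * z ^ n)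
      (hyp2F1 (3/2) (3/2) 2 z) :=
    (summable_hyp (by norm_num) (by norm_num) two_pos habs).hasSum
  set f : ℕ → ℝ := fun n =>
    (poch (3/2) n * poch (1/2) n / (poch 1 n * n.factorial)
      - poch (1/2) n * poch (1/2) n / (poch 1 n * n.factorial)) * z ^ n with hf
  have hAB : HasSum f (hyp2F1 (3/2) (1/2) 1 z - hyp2F1 (1/2) (1/2) 1 z) := by
    apply (hA.sub hB).congr_fun
    intro n
    rw [hf]; ring
  have hkey : ∀ n : ℕ, (z/2) * (poch (3/2) n * poch (3/2) n / (poch 2 n * n.factorial) * z ^ n)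
      = f (n + 1) := by
    intro n
    rw [hf]
    simp only
    have h4 : ((n.factorial : ℝ)) ≠ 0 := by exact_mod_cast n.factorial_pos.ne'
    have hp2 := (poch_pos (a := 1/2) (by norm_num) n).ne'
    have h5 : ((n:ℝ)+1) ≠ 0 := by positivity
    rw [poch_succ, poch_succ, poch_one, poch_two, poch_three_halves,
      Nat.factorial_succ, pow_succ]
    push_cast
    field_simp
    ring
  have hC2 : HasSum (fun n => f (n + 1)) ((z/2) * hyp2F1 (3/2) (3/2) 2 z) := by
    apply (hC.mul_left (z/2)).congr_fun
    intro n
    exact (hkey n).symm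
  have hf0 : f 0 = 0 := by
    rw [hf]; simp [poch_zero]
  have := (hasSum_nat_add_iff (f := f) 1).1 hC2
  rw [Finset.sum_range_one, hf0, add_zero] at this
  exact hAB.unique this

theorem integral_I2_eq_hyp (ξ : ℝ) (h0 : 0 ≤ ξ) (h1 : ξ < 1) :
    ∫ ψ in (0:ℝ)..π, Real.cos ψ * (1 - ξ * Real.cos ψ) ^ (-(3/2) : ℝ) =
      π / (1 + ξ) ^ ((3/2) : ℝ) *
        (hyp2F1 (3/2) (3/2) 2 (2 * ξ / (1 + ξ)) - hyp2F1 (1/2) (3/2) 1 (2 * ξ / (1 + ξ))) := by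
  rcases eq_or_lt_of_le h0 with rfl | hξpos
  · simp only [zero_mul, sub_zero, Real.one_rpow, mul_one, mul_zero, zero_div]
    rw [integral_cos, hyp2F1_zero, hyp2F1_zero]
    simp
  · have hξ1 : (0:ℝ) < 1 + ξ := by linarith
    have hu : ∀ ψ : ℝ, 0 < 1 - ξ * Real.cos ψ := by
      intro ψ
      nlinarith [Real.neg_one_le_cos ψ, Real.cos_le_one ψ]
    have hcont : ∀ s : ℝ, Continuous fun ψ => (1 - ξ * Real.cos ψ) ^ (-s) := by
      intro s
      apply Continuous.rpow_const (by fun_prop)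
      intro ψ
      exact Or.inl (hu ψ).ne'
    -- Step 1: split the integrand
    have step1 : ∫ ψ in (0:ℝ)..π, Real.cos ψ * (1 - ξ * Real.cos ψ) ^ (-(3/2) : ℝ)
        = ξ⁻¹ * ((∫ ψ in (0:ℝ)..π, (1 - ξ * Real.cos ψ) ^ (-(3/2) : ℝ))
          - ∫ ψ in (0:ℝ)..π, (1 - ξ * Real.cos ψ) ^ (-(1/2) : ℝ)) := by
      rw [intervalIntegral.integral_congr (g := fun ψ => ξ⁻¹ *
          ((1 - ξ * Real.cos ψ) ^ (-(3/2) : ℝ) - (1 - ξ * Real.cos ψ) ^ (-(1/2) : ℝ)))]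
      · rw [intervalIntegral.integral_const_mul,
          intervalIntegral.integral_sub ((hcont (3/2)).intervalIntegrable 0 π)
            ((hcont (1/2)).intervalIntegrable 0 π)]
      · intro ψ _
        have he : (1 - ξ * Real.cos ψ) ^ (-(1/2) : ℝ)
            = (1 - ξ * Real.cos ψ) ^ (-(3/2) : ℝ) * (1 - ξ * Real.cos ψ) := by
          rw [← Real.rpow_add_one (hu ψ).ne' (-(3/2))]
          norm_num
        simp only
        rw [he]
        field_simp
        ring
    rw [step1, I_eq (by norm_num : (0:ℝ) < 3/2) h0 h1, I_eq (by norm_num : (0:ℝ) < 1/2) h0 h1]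
    have hz0 : 0 ≤ 2*ξ/(1+ξ) := by positivity
    have hz1 : 2*ξ/(1+ξ) < 1 := by rw [div_lt_one hξ1]; linarith
    have hD : hyp2F1 (1/2) (3/2) 1 (2*ξ/(1+ξ)) = hyp2F1 (3/2) (1/2) 1 (2*ξ/(1+ξ)) :=
      hyp2F1_symm _ _ _ _
    have h2 := claim2 hz0 hz1
    have hznum : (2*ξ/(1+ξ)) * (1+ξ) = 2*ξ := by field_simp
    have key : hyp2F1 (3/2) (1/2) 1 (2*ξ/(1+ξ)) - (1+ξ) * hyp2F1 (1/2) (1/2) 1 (2*ξ/(1+ξ))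
        = ξ * (hyp2F1 (3/2) (3/2) 2 (2*ξ/(1+ξ)) - hyp2F1 (3/2) (1/2) 1 (2*ξ/(1+ξ))) := by
      linear_combination (1+ξ) * h2 + (hyp2F1 (3/2) (3/2) 2 (2*ξ/(1+ξ)) / 2) * hznum
    have e1 : (1+ξ) ^ (-(1/2) : ℝ) = (1+ξ) ^ (-(3/2) : ℝ) * (1+ξ) := by
      rw [← Real.rpow_add_one hξ1.ne' (-(3/2))]
      norm_num
    have e2 : π / (1+ξ) ^ ((3/2) : ℝ) = π * (1+ξ) ^ (-(3/2) : ℝ) := by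
      rw [Real.rpow_neg hξ1.le]
      ring
    rw [hD, e1, e2, inv_mul_eq_div, div_eq_iff hξpos.ne']
    linear_combination (π * (1+ξ) ^ (-(3/2) : ℝ)) * key
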